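/- arXiv:1910.03674 — 2 statements merged into one kernel-verified Lean document; each statement's English description precedes it below -/
import Mathlib

section
/- Let n : ℕ, let S : Fin n → Type, and for each i let B i be a Boolean subalgebra of Set (S i). Let P be an element of the sum ⊕_i B i, i.e., P belongs to the Boolean subalgebra of Set (∀ i, S i) generated by the parallelepipeds. For each i define the relation ρ_i on S i by: ρ_i a b iff for every x : ∀ j, S j, (Function.update x i a ∈ P ↔ Function.update x i b ∈ P). Then: (a) each ρ_i is an equivalence relation with only finitely many equivalence classes; (b) for every a ∈ S i the class {b | ρ_i a b} belongs to B i; and (c) P = ⋃ over s ∈ P of the sets {x | ∀ i, ρ_i (s i) (x i)}. -/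
/-- A Boolean subalgebra of a Boolean algebra `α`: a set of elements closed under
the Boolean operations. -/
structure BoolSubalg (α : Type*) [BooleanAlgebra α] where
  carrier : Set α
  bot_mem : ⊥ ∈ carrier
  top_mem : ⊤ ∈ carrier
  sup_mem : ∀ ⦃a⦄, a ∈ carrier → ∀ ⦃b⦄, b ∈ carrier → a ⊔ b ∈ carrier
  inf_mem : ∀ ⦃a⦄, a ∈ carrier → ∀ ⦃b⦄, b ∈ carrier → a ⊓ b ∈ carrier
  compl_mem : ∀ ⦃a⦄, a ∈ carrier → aᶜ ∈ carrier

/-- The infimum (intersection) of a family of Boolean subalgebras. -/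
def BoolSubalg.iInf {α : Type*} [BooleanAlgebra α] {J : Type*} (B : J → BoolSubalg α) :
    BoolSubalg α where
  carrier := ⋂ j, (B j).carrier
  bot_mem := Set.mem_iInter.2 fun j => (B j).bot_mem
  top_mem := Set.mem_iInter.2 fun j => (B j).top_mem
  sup_mem := fun a ha b hb => Set.mem_iInter.2 fun j =>
    (B j).sup_mem (Set.mem_iInter.1 ha j) (Set.mem_iInter.1 hb j)
  inf_mem := fun a ha b hb => Set.mem_iInter.2 fun j =>
    (B j).inf_mem (Set.mem_iInter.1 ha j) (Set.mem_iInter.1 hb j)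
  compl_mem := fun a ha => Set.mem_iInter.2 fun j =>
    (B j).compl_mem (Set.mem_iInter.1 ha j)

/-- The Boolean subalgebra generated by a set `s`. -/
def BoolSubalg.gen {α : Type*} [BooleanAlgebra α] (s : Set α) : BoolSubalg α :=
  BoolSubalg.iInf (J := {B : BoolSubalg α // s ⊆ B.carrier}) fun B => B.1

/-- The sum `⊕ᵢ Bᵢ` of Boolean algebras of sets: the Boolean subalgebra of
`Set (∀ i, S i)` generated by the parallelepipeds `{x | ∀ i, x i ∈ L i}` with
`L i ∈ B i`. -/
def boolSum {n : ℕ} {S : Fin n → Type*} (B : ∀ i, BoolSubalg (Set (S i))) :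
    BoolSubalg (Set (∀ i, S i)) :=
  BoolSubalg.gen {P | ∃ L : ∀ i, Set (S i), (∀ i, L i ∈ (B i).carrier) ∧
    P = {x | ∀ i, x i ∈ L i}}

/-- The canonical equivalence relation `ρ_i` on `S i` associated to a set
`P ⊆ ∀ i, S i`. -/
def rho {n : ℕ} {S : Fin n → Type*} (P : Set (∀ i, S i)) (i : Fin n) (a b : S i) :
    Prop :=
  ∀ x : ∀ j, S j, Function.update x i a ∈ P ↔ Function.update x i b ∈ P

lemma BoolSubalg.biUnion_mem {α ι : Type*} (A : BoolSubalg (Set α)) {s : Set ι}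
    (hs : s.Finite) {f : ι → Set α} (hf : ∀ t ∈ s, f t ∈ A.carrier) :
    (⋃ t ∈ s, f t) ∈ A.carrier := by
  revert hf
  refine Set.Finite.induction_on s hs (by intro _; simpa using A.bot_mem) ?_
  intro a s ha hsf ih hf
  rw [Set.biUnion_insert]
  have := A.sup_mem (hf _ (Set.mem_insert _ _))
    (ih fun t ht => hf t (Set.mem_insert_of_mem _ ht))
  simpa using this

lemma BoolSubalg.biInter_mem {α ι : Type*} (A : BoolSubalg (Set α)) {s : Set ι}
    (hs : s.Finite) {f : ι → Set α} (hf : ∀ t ∈ s, f t ∈ A.carrier) :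
    (⋂ t ∈ s, f t) ∈ A.carrier := by
  revert hf
  refine Set.Finite.induction_on s hs (by intro _; simpa using A.top_mem) ?_
  intro a s ha hsf ih hf
  rw [Set.biInter_insert]
  have := A.inf_mem (hf _ (Set.mem_insert _ _))
    (ih fun t ht => hf t (Set.mem_insert_of_mem _ ht))
  simpa using this

/-- `P` is a finite union of boxes with sides in the `B i`. -/
def IsBoxUnion {n : ℕ} {S : Fin n → Type*} (B : ∀ i, BoolSubalg (Set (S i)))
    (P : Set (∀ i, S i)) : Prop :=
  ∃ T : Set (∀ i, Set (S i)), T.Finite ∧ (∀ L ∈ T, ∀ i, L i ∈ (B i).carrier) ∧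
    P = ⋃ L ∈ T, {x | ∀ i, x i ∈ L i}

namespace IsBoxUnion

variable {n : ℕ} {S : Fin n → Type*} {B : ∀ i, BoolSubalg (Set (S i))}

lemma bot : IsBoxUnion B (⊥ : Set (∀ i, S i)) :=
  ⟨∅, Set.finite_empty, by simp, by simp⟩

lemma top : IsBoxUnion B (⊤ : Set (∀ i, S i)) := by
  refine ⟨{fun _ => Set.univ}, Set.finite_singleton _, ?_, ?_⟩
  · rintro L rfl i
    simpa [Set.top_eq_univ] using (B i).top_mem
  · ext x; simp

lemma sup {P Q : Set (∀ i, S i)} (hP : IsBoxUnion B P) (hQ : IsBoxUnion B Q) :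
    IsBoxUnion B (P ⊔ Q) := by
  obtain ⟨T, hTf, hTm, rfl⟩ := hP
  obtain ⟨U, hUf, hUm, rfl⟩ := hQ
  refine ⟨T ∪ U, hTf.union hUf, ?_, ?_⟩
  · rintro L (hL | hL) i
    exacts [hTm L hL i, hUm L hL i]
  · ext x
    simp only [Set.sup_eq_union, Set.mem_union, Set.mem_iUnion, Set.mem_setOf_eq,
      exists_prop]
    constructor
    · rintro (⟨L, hL, h⟩ | ⟨L, hL, h⟩)
      exacts [⟨L, Or.inl hL, h⟩, ⟨L, Or.inr hL, h⟩]
    · rintro ⟨L, hL | hL, h⟩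
      exacts [Or.inl ⟨L, hL, h⟩, Or.inr ⟨L, hL, h⟩]

lemma inf {P Q : Set (∀ i, S i)} (hP : IsBoxUnion B P) (hQ : IsBoxUnion B Q) :
    IsBoxUnion B (P ⊓ Q) := by
  obtain ⟨T, hTf, hTm, rfl⟩ := hP
  obtain ⟨U, hUf, hUm, rfl⟩ := hQ
  refine ⟨(fun p : (∀ i, Set (S i)) × (∀ i, Set (S i)) => fun i => p.1 i ∩ p.2 i) ''
    (T ×ˢ U), (hTf.prod hUf).image _, ?_, ?_⟩
  · rintro N ⟨⟨L, M⟩, ⟨hL, hM⟩, rfl⟩ i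
    exact (B i).inf_mem (hTm L hL i) (hUm M hM i)
  · rw [Set.biUnion_image]
    ext x
    simp only [Set.inf_eq_inter, Set.mem_inter_iff, Set.mem_iUnion, Set.mem_setOf_eq,
      Set.mem_prod]
    constructor
    · rintro ⟨⟨L, hL, hLx⟩, ⟨M, hM, hMx⟩⟩
      exact ⟨(L, M), ⟨hL, hM⟩, fun i => ⟨hLx i, hMx i⟩⟩
    · rintro ⟨⟨L, M⟩, ⟨hL, hM⟩, hx⟩
      exact ⟨⟨L, hL, fun i => (hx i).1⟩, ⟨M, hM, fun i => (hx i).2⟩⟩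

lemma box_compl {L : ∀ i, Set (S i)} (hL : ∀ i, L i ∈ (B i).carrier) :
    IsBoxUnion B ({x | ∀ i, x i ∈ L i}ᶜ) := by
  refine ⟨(fun i => Function.update (fun j => (Set.univ : Set (S j))) i (L i)ᶜ) ''
    Set.univ, (Set.finite_univ.image _), ?_, ?_⟩
  · rintro N ⟨i, -, rfl⟩ j
    by_cases hj : j = i
    · subst hj
      simpa using (B j).compl_mem (hL j)
    · show Function.update (fun j => (Set.univ : Set (S j))) i (L i)ᶜ j ∈ (B j).carrier
      rw [Function.update_of_ne hj]
      simpa [Set.top_eq_univ] using (B j).top_mem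
  · rw [Set.biUnion_image]
    ext x
    simp only [Set.mem_compl_iff, Set.mem_setOf_eq, Set.mem_iUnion]
    push_neg
    constructor
    · rintro ⟨i, hi⟩
      refine ⟨i, Set.mem_univ i, fun j => ?_⟩
      by_cases hj : j = i
      · subst hj; simpa using hi
      · simp [Function.update_of_ne hj]
    · rintro ⟨i, -, hi⟩
      refine ⟨i, by simpa using hi i⟩

lemma biInter {ι : Type*} {s : Set ι} (hs : s.Finite) {f : ι → Set (∀ i, S i)}
    (hf : ∀ t ∈ s, IsBoxUnion B (f t)) : IsBoxUnion B (⋂ t ∈ s, f t) := by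
  revert hf
  refine Set.Finite.induction_on s hs (by intro _; simpa [Set.top_eq_univ] using top (B := B)) ?_
  intro a s ha hsf ih hf
  rw [Set.biInter_insert]
  have := inf (hf _ (Set.mem_insert _ _)) (ih fun t ht => hf t (Set.mem_insert_of_mem _ ht))
  simpa using this

lemma compl {P : Set (∀ i, S i)} (hP : IsBoxUnion B P) : IsBoxUnion B Pᶜ := by
  obtain ⟨T, hTf, hTm, rfl⟩ := hP
  rw [Set.compl_iUnion₂]
  exact biInter hTf fun L hL => box_compl (hTm L hL)

end IsBoxUnion

/-- The Boolean subalgebra of finite unions of boxes. -/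
def boxUnionAlg {n : ℕ} {S : Fin n → Type*} (B : ∀ i, BoolSubalg (Set (S i))) :
    BoolSubalg (Set (∀ i, S i)) where
  carrier := {P | IsBoxUnion B P}
  bot_mem := IsBoxUnion.bot
  top_mem := IsBoxUnion.top
  sup_mem := fun _ h _ h' => h.sup h'
  inf_mem := fun _ h _ h' => h.inf h'
  compl_mem := fun _ h => h.compl

lemma isBoxUnion_of_mem {n : ℕ} {S : Fin n → Type*} {B : ∀ i, BoolSubalg (Set (S i))}
    {P : Set (∀ i, S i)} (hP : P ∈ (boolSum B).carrier) : IsBoxUnion B P := by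
  have hgen : {P : Set (∀ i, S i) | ∃ L : ∀ i, Set (S i), (∀ i, L i ∈ (B i).carrier) ∧
      P = {x | ∀ i, x i ∈ L i}} ⊆ (boxUnionAlg B).carrier := by
    rintro Q ⟨L, hL, rfl⟩
    refine ⟨{L}, Set.finite_singleton _, ?_, by simp⟩
    rintro M rfl i
    exact hL i
  exact Set.mem_iInter.1 hP ⟨boxUnionAlg B, hgen⟩

/-- For an element `P` of the sum `⊕ᵢ Bᵢ`, each `ρ_i` is an equivalence relation of
finite index whose classes lie in `Bᵢ`, and `P` is the union of the products of
`ρ`-classes of its elements. -/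
theorem canonical_decomposition {n : ℕ} {S : Fin n → Type*}
    (B : ∀ i, BoolSubalg (Set (S i))) (P : Set (∀ i, S i))
    (hP : P ∈ (boolSum B).carrier) :
    (∀ i, Equivalence (rho P i)) ∧
    (∀ i, (Set.range fun a : S i => {b | rho P i a b}).Finite) ∧
    (∀ i, ∀ a : S i, {b | rho P i a b} ∈ (B i).carrier) ∧
    P = ⋃ s ∈ P, {x | ∀ i, rho P i (s i) (x i)} := by
  classical
  obtain ⟨T, hTf, hTm, hPr⟩ := isBoxUnion_of_mem hP
  -- membership of an updated point in a box
  have hupd : ∀ (i : Fin n) (a : S i) (x : ∀ j, S j) (L : ∀ j, Set (S j)),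
      (∀ j, Function.update x i a j ∈ L j) ↔ (a ∈ L i ∧ ∀ j, j ≠ i → x j ∈ L j) := by
    intro i a x L
    constructor
    · intro h
      refine ⟨by simpa using h i, fun j hj => by simpa [Function.update_of_ne hj] using h j⟩
    · rintro ⟨h1, h2⟩ j
      by_cases hj : j = i
      · subst hj; simpa using h1
      · simpa [Function.update_of_ne hj] using h2 j hj
  set c : ∀ i : Fin n, S i → Set (∀ j, Set (S j)) :=
    fun i a => {L | L ∈ T ∧ a ∈ L i} with hc
  have hc_sub : ∀ i (a : S i), c i a ⊆ T := fun i a L hL => hL.1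
  have hc_rho : ∀ (i : Fin n) (a b : S i), c i a = c i b → rho P i a b := by
    have aux : ∀ (i : Fin n) (a b : S i), c i a ⊆ c i b → ∀ x : ∀ j, S j,
        Function.update x i a ∈ P → Function.update x i b ∈ P := by
      intro i a b hab x hx
      rw [hPr] at hx ⊢
      simp only [Set.mem_iUnion, exists_prop, Set.mem_setOf_eq] at hx ⊢
      obtain ⟨L, hLT, hL⟩ := hx
      rw [hupd] at hL
      have hmem : L ∈ c i b := hab ⟨hLT, hL.1⟩
      exact ⟨L, hLT, (hupd i b x L).2 ⟨hmem.2, hL.2⟩⟩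
    intro i a b h x
    exact ⟨aux i a b h.subset x, aux i b a h.symm.subset x⟩
  -- fibers of c lie in B i
  have hfib_mem : ∀ (i : Fin n) (v : Set (∀ j, Set (S j))), v ⊆ T →
      {b : S i | c i b = v} ∈ (B i).carrier := by
    intro i v hv
    have heq : {b : S i | c i b = v} = (⋂ L ∈ v, L i) ∩ (⋂ L ∈ T \ v, (L i)ᶜ) := by
      ext b
      simp only [Set.mem_setOf_eq, Set.mem_inter_iff, Set.mem_iInter, Set.mem_diff,
        Set.mem_compl_iff]
      constructor
      · rintro rfl
        refine ⟨fun L hL => hL.2, fun L hL hbL => hL.2 ⟨hL.1, hbL⟩⟩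
      · rintro ⟨h1, h2⟩
        ext L
        simp only [hc, Set.mem_setOf_eq]
        constructor
        · rintro ⟨hLT, hbL⟩
          by_contra hLv
          exact h2 L ⟨hLT, hLv⟩ hbL
        · intro hLv
          exact ⟨hv hLv, h1 L hLv⟩
    rw [heq]
    exact (B i).inf_mem
      ((B i).biInter_mem (hTf.subset hv) fun L hL => hTm L (hv hL) i)
      ((B i).biInter_mem hTf.diff fun L hL => (B i).compl_mem (hTm L hL.1 i))
  -- each rho-class is a union of fibers of c
  have hclass : ∀ (i : Fin n) (a : S i),
      {b | rho P i a b} = ⋃ v ∈ c i '' {b | rho P i a b}, {b : S i | c i b = v} := by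
    intro i a
    ext b
    simp only [Set.mem_iUnion, Set.mem_image, exists_prop, Set.mem_setOf_eq]
    constructor
    · intro hb
      exact ⟨c i b, ⟨b, hb, rfl⟩, rfl⟩
    · rintro ⟨v, ⟨b', hb', rfl⟩, hbv⟩
      intro x
      exact (hb' x).trans (hc_rho i b' b hbv.symm x)
  have part1 : ∀ i, Equivalence (rho P i) := fun i =>
    ⟨fun a x => Iff.rfl, fun h x => (h x).symm, fun h1 h2 x => (h1 x).trans (h2 x)⟩
  have part2 : ∀ i, (Set.range fun a : S i => {b | rho P i a b}).Finite := by
    intro i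
    have hsub : (Set.range fun a : S i => {b | rho P i a b}) ⊆
        (fun V : Set (Set (∀ j, Set (S j))) => ⋃ v ∈ V, {b : S i | c i b = v}) ''
          {V | V ⊆ {v | v ⊆ T}} := by
      rintro - ⟨a, rfl⟩
      refine ⟨c i '' {b | rho P i a b}, ?_, (hclass i a).symm⟩
      rintro v ⟨b, -, rfl⟩
      exact hc_sub i b
    exact ((hTf.finite_subsets.finite_subsets).image _).subset hsub
  have part3 : ∀ i (a : S i), {b | rho P i a b} ∈ (B i).carrier := by
    intro i a
    rw [hclass i a]
    refine (B i).biUnion_mem ?_ ?_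
    · exact (hTf.finite_subsets).subset (by rintro v ⟨b, -, rfl⟩; exact hc_sub i b)
    · rintro v ⟨b, -, rfl⟩
      exact hfib_mem i (c i b) (hc_sub i b)
  have hchain : ∀ s x : ∀ j, S j, (∀ i, rho P i (s i) (x i)) → (s ∈ P ↔ x ∈ P) := by
    intro s x h
    have key : ∀ m : ℕ, m ≤ n →
        (s ∈ P ↔ (fun j : Fin n => if (j : ℕ) < m then x j else s j) ∈ P) := by
      intro m
      induction m with
      | zero =>
        intro _
        have h0 : (fun j : Fin n => if (j : ℕ) < 0 then x j else s j) = s :=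
          funext fun j => by simp
        rw [h0]
      | succ m ih =>
        intro hm
        have hmn : m < n := hm
        set i : Fin n := ⟨m, hmn⟩ with hi
        set z : ∀ j, S j := fun j : Fin n => if (j : ℕ) < m then x j else s j with hz
        have e2 : z = Function.update z i (s i) := by
          funext j
          by_cases hj : j = i
          · subst hj
            simp only [Function.update_self, hz]
            simp [hi]
          · rw [Function.update_of_ne hj]
        have e1 : (fun j : Fin n => if (j : ℕ) < m + 1 then x j else s j)
            = Function.update z i (x i) := by
          funext j
          by_cases hj : j = i
          · subst hj
            simp [Function.update_self, hi]
          · rw [Function.update_of_ne hj, hz]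
            have hne : (j : ℕ) ≠ m := fun hjm => hj (Fin.ext (by simp [hi, hjm]))
            by_cases hlt : (j : ℕ) < m
            · simp only [if_pos hlt, if_pos (Nat.lt_succ_of_lt hlt)]
            · have hlt' : ¬ (j : ℕ) < m + 1 := by omega
              simp only [if_neg hlt, if_neg hlt']
        rw [e1]
        have step : z ∈ P ↔ Function.update z i (x i) ∈ P := by
          conv_lhs => rw [e2]
          exact h i z
        exact (ih (Nat.le_of_succ_le hm)).trans step
    have hx : (fun j : Fin n => if (j : ℕ) < n then x j else s j) = x :=
      funext fun j => by simp [j.isLt]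
    simpa [hx] using key n le_rfl
  have part4 : P = ⋃ s ∈ P, {x | ∀ i, rho P i (s i) (x i)} := by
    ext x
    simp only [Set.mem_iUnion, exists_prop, Set.mem_setOf_eq]
    constructor
    · intro hx
      exact ⟨x, hx, fun i y => Iff.rfl⟩
    · rintro ⟨s, hs, hsx⟩
      exact (hchain s x hsx).1 hs
  exact ⟨part1, part2, part3, part4⟩
end

section
/- Let n : ℕ, let S : Fin n → Type, let J be a nonempty index type, and for each i : Fin n and j : J let B i j be a Boolean subalgebra of Set (S i). Then the intersection over j ∈ J of the sums ⊕_i (B i j) equals the sum ⊕_i (⋂_j B i j); in lattice terms, ⨅_{j} (⊕_i B i j) = ⊕_i (⨅_j B i j), where infima of Boolean subalgebras are given by intersections of their carriers. -/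
-- auxiliary lemmas
namespace BoolAux
open BoolSubalg

theorem BoolSubalg.ext' {α : Type*} [BooleanAlgebra α] {A B : BoolSubalg α}
    (h : A.carrier = B.carrier) : A = B := by
  cases A; cases B; simpa using h

theorem subset_gen {α : Type*} [BooleanAlgebra α] {s : Set α} : s ⊆ (BoolSubalg.gen s).carrier :=
  fun a ha => Set.mem_iInter.2 fun B => B.2 ha

theorem gen_subset {α : Type*} [BooleanAlgebra α] {s : Set α} {B : BoolSubalg α}
    (h : s ⊆ B.carrier) : (BoolSubalg.gen s).carrier ⊆ B.carrier :=
  fun a ha => Set.mem_iInter.1 ha ⟨B, h⟩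

theorem sUnion_mem {β : Type*} (B : BoolSubalg (Set β)) {t : Set (Set β)} (ht : t.Finite)
    (h : ∀ a ∈ t, a ∈ B.carrier) : ⋃₀ t ∈ B.carrier := by
  revert h
  refine Set.Finite.induction_on _ ht (fun _ => ?_) (fun {a s} _ _ ih h => ?_)
  · rw [Set.sUnion_empty]; exact B.bot_mem
  · rw [Set.sUnion_insert]
    exact B.sup_mem (h _ (Set.mem_insert _ _)) (ih fun a ha => h a (Set.mem_insert_of_mem _ ha))

theorem sInter_mem {β : Type*} (B : BoolSubalg (Set β)) {t : Set (Set β)} (ht : t.Finite)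
    (h : ∀ a ∈ t, a ∈ B.carrier) : ⋂₀ t ∈ B.carrier := by
  revert h
  refine Set.Finite.induction_on _ ht (fun _ => ?_) (fun {a s} _ _ ih h => ?_)
  · rw [Set.sInter_empty]; exact B.top_mem
  · rw [Set.sInter_insert]
    exact B.inf_mem (h _ (Set.mem_insert _ _)) (ih fun a ha => h a (Set.mem_insert_of_mem _ ha))

end BoolAux

namespace BoolAux

variable {n : ℕ} {S : Fin n → Type*}

def box (L : ∀ i, Set (S i)) : Set (∀ i, S i) := {x | ∀ i, x i ∈ L i}

def slice (i : Fin n) (x : ∀ k, S k) (P : Set (∀ i, S i)) : Set (S i) :=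
  {y | Function.update x i y ∈ P}

theorem slice_bot (i : Fin n) (x : ∀ k, S k) : slice i x (⊥ : Set (∀ i, S i)) = ⊥ := rfl

theorem slice_sup (i : Fin n) (x : ∀ k, S k) (P Q : Set (∀ i, S i)) :
    slice i x (P ⊔ Q) = slice i x P ⊔ slice i x Q := rfl

theorem slice_inf (i : Fin n) (x : ∀ k, S k) (P Q : Set (∀ i, S i)) :
    slice i x (P ⊓ Q) = slice i x P ⊓ slice i x Q := rfl

theorem slice_compl (i : Fin n) (x : ∀ k, S k) (P : Set (∀ i, S i)) :
    slice i x Pᶜ = (slice i x P)ᶜ := rfl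

open Classical in
theorem slice_box (i : Fin n) (x : ∀ k, S k) (L : ∀ i, Set (S i)) :
    slice i x (box L) = if ∀ k, k ≠ i → x k ∈ L k then L i else ∅ := by
  split_ifs with h
  · ext y
    simp only [slice, box, Set.mem_setOf_eq]
    constructor
    · intro hy; simpa using hy i
    · intro hy k
      rcases eq_or_ne k i with rfl | hk
      · simpa using hy
      · simpa [Function.update_of_ne hk] using h k hk
  · ext y
    simp only [slice, box, Set.mem_setOf_eq, Set.mem_empty_iff_false, iff_false]
    intro hy
    exact h fun k hk => by simpa [Function.update_of_ne hk] using hy k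

def sliceAlg (B : ∀ i, BoolSubalg (Set (S i))) : BoolSubalg (Set (∀ i, S i)) where
  carrier := {P | ∀ i x, slice i x P ∈ (B i).carrier}
  bot_mem := fun i _ => (B i).bot_mem
  top_mem := fun i _ => (B i).top_mem
  sup_mem := fun _ ha _ hb i x => (B i).sup_mem (ha i x) (hb i x)
  inf_mem := fun _ ha _ hb i x => (B i).inf_mem (ha i x) (hb i x)
  compl_mem := fun _ ha i x => (B i).compl_mem (ha i x)

theorem slice_mem {B : ∀ i, BoolSubalg (Set (S i))} {P : Set (∀ i, S i)}
    (hP : P ∈ (boolSum B).carrier) (i : Fin n) (x : ∀ k, S k) :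
    slice i x P ∈ (B i).carrier := by
  refine gen_subset (B := sliceAlg B) ?_ hP i x
  rintro Q ⟨L, hL, rfl⟩ i x
  rw [show {x | ∀ i, x i ∈ L i} = box L from rfl, slice_box]
  classical
  split_ifs
  · exact hL i
  · exact (B i).bot_mem

theorem mem_slice {i : Fin n} {x : ∀ k, S k} {P : Set (∀ i, S i)} {y : S i} :
    y ∈ slice i x P ↔ Function.update x i y ∈ P := Iff.rfl

theorem self_mem_slice_iff {i : Fin n} {x : ∀ k, S k} {P : Set (∀ i, S i)} :
    x i ∈ slice i x P ↔ x ∈ P := by rw [mem_slice, Function.update_eq_self]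

end BoolAux
namespace BoolAux
variable {n : ℕ} {S : Fin n → Type*}

def IsFinUnion (B : ∀ i, BoolSubalg (Set (S i))) (P : Set (∀ i, S i)) : Prop :=
  ∃ G : Set (∀ i, Set (S i)), G.Finite ∧ (∀ L ∈ G, ∀ i, L i ∈ (B i).carrier) ∧
    P = ⋃₀ (box '' G)

theorem isFinUnion_bot (B : ∀ i, BoolSubalg (Set (S i))) : IsFinUnion B (⊥ : Set (∀ i, S i)) :=
  ⟨∅, Set.finite_empty, by simp, by simp⟩

theorem isFinUnion_top (B : ∀ i, BoolSubalg (Set (S i))) : IsFinUnion B (⊤ : Set (∀ i, S i)) := by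
  refine ⟨{fun _ => Set.univ}, Set.finite_singleton _, ?_, ?_⟩
  · rintro L rfl i; exact (B i).top_mem
  · ext x; simp [box]

theorem isFinUnion_sup {B : ∀ i, BoolSubalg (Set (S i))} {P Q : Set (∀ i, S i)}
    (hP : IsFinUnion B P) (hQ : IsFinUnion B Q) : IsFinUnion B (P ⊔ Q) := by
  obtain ⟨G1, hG1, hm1, rfl⟩ := hP
  obtain ⟨G2, hG2, hm2, rfl⟩ := hQ
  refine ⟨G1 ∪ G2, hG1.union hG2, ?_, ?_⟩
  · rintro L (hL | hL) i
    · exact hm1 L hL i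
    · exact hm2 L hL i
  · rw [Set.image_union, Set.sUnion_union]; rfl

theorem box_inter (L M : ∀ i, Set (S i)) :
    box L ∩ box M = box (fun i => L i ∩ M i) := by
  ext x; simp only [box, Set.mem_inter_iff, Set.mem_setOf_eq, ← forall_and]

theorem isFinUnion_inf {B : ∀ i, BoolSubalg (Set (S i))} {P Q : Set (∀ i, S i)}
    (hP : IsFinUnion B P) (hQ : IsFinUnion B Q) : IsFinUnion B (P ⊓ Q) := by
  obtain ⟨G1, hG1, hm1, rfl⟩ := hP
  obtain ⟨G2, hG2, hm2, rfl⟩ := hQ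
  refine ⟨Set.image2 (fun L M => fun i => L i ∩ M i) G1 G2, hG1.image2 _ hG2, ?_, ?_⟩
  · rintro - ⟨L, hL, M, hM, rfl⟩ i
    exact (B i).inf_mem (hm1 L hL i) (hm2 M hM i)
  · ext x
    simp only [Set.inf_eq_inter, Set.mem_inter_iff, Set.mem_sUnion, Set.mem_image,
      Set.mem_image2]
    constructor
    · rintro ⟨⟨-, ⟨L, hL, rfl⟩, hxL⟩, ⟨-, ⟨M, hM, rfl⟩, hxM⟩⟩
      exact ⟨_, ⟨_, ⟨L, hL, M, hM, rfl⟩, rfl⟩, fun i => ⟨hxL i, hxM i⟩⟩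
    · rintro ⟨-, ⟨-, ⟨L, hL, M, hM, rfl⟩, rfl⟩, hx⟩
      exact ⟨⟨_, ⟨L, hL, rfl⟩, fun i => (hx i).1⟩, ⟨_, ⟨M, hM, rfl⟩, fun i => (hx i).2⟩⟩

theorem compl_box (L : ∀ i, Set (S i)) :
    (box L)ᶜ = ⋃ i, box (Function.update (fun k => (Set.univ : Set (S k))) i (L i)ᶜ) := by
  classical
  ext x
  simp only [Set.mem_compl_iff, box, Set.mem_setOf_eq, Set.mem_iUnion, not_forall]
  constructor
  · rintro ⟨i, hi⟩
    refine ⟨i, fun k => ?_⟩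
    rcases eq_or_ne k i with rfl | hk
    · simpa using hi
    · simp [Function.update_of_ne hk]
  · rintro ⟨i, hi⟩
    exact ⟨i, by simpa using hi i⟩

theorem isFinUnion_compl_box {B : ∀ i, BoolSubalg (Set (S i))} {L : ∀ i, Set (S i)}
    (hL : ∀ i, L i ∈ (B i).carrier) : IsFinUnion B (box L)ᶜ := by
  classical
  refine ⟨Set.range (fun i => Function.update (fun k => (Set.univ : Set (S k))) i (L i)ᶜ),
    Set.finite_range _, ?_, ?_⟩
  · rintro - ⟨i, rfl⟩ k
    rcases eq_or_ne k i with rfl | hk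
    · simpa using (B k).compl_mem (hL k)
    · simpa [Function.update_of_ne hk] using (B k).top_mem
  · rw [compl_box]
    ext x
    simp only [Set.mem_iUnion, Set.mem_sUnion, Set.mem_image, Set.mem_range]
    constructor
    · rintro ⟨i, hi⟩; exact ⟨_, ⟨_, ⟨i, rfl⟩, rfl⟩, hi⟩
    · rintro ⟨-, ⟨-, ⟨i, rfl⟩, rfl⟩, hx⟩; exact ⟨i, hx⟩

theorem isFinUnion_compl {B : ∀ i, BoolSubalg (Set (S i))} {P : Set (∀ i, S i)}
    (hP : IsFinUnion B P) : IsFinUnion B Pᶜ := by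
  obtain ⟨G, hG, hm, rfl⟩ := hP
  revert hm
  refine Set.Finite.induction_on _ hG (fun _ => ?_) (fun {L G'} _ _ ih hm => ?_)
  · simpa using isFinUnion_top B
  · have h1 : (⋃₀ (box '' insert L G'))ᶜ = (box L)ᶜ ⊓ (⋃₀ (box '' G'))ᶜ := by
      rw [Set.image_insert_eq, Set.sUnion_insert, Set.compl_union]; rfl
    rw [h1]
    exact isFinUnion_inf (isFinUnion_compl_box fun i => hm L (Set.mem_insert _ _) i)
      (ih fun M hM i => hm M (Set.mem_insert_of_mem _ hM) i)

def finUnionAlg (B : ∀ i, BoolSubalg (Set (S i))) : BoolSubalg (Set (∀ i, S i)) where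
  carrier := {P | IsFinUnion B P}
  bot_mem := isFinUnion_bot B
  top_mem := isFinUnion_top B
  sup_mem := fun _ ha _ hb => isFinUnion_sup ha hb
  inf_mem := fun _ ha _ hb => isFinUnion_inf ha hb
  compl_mem := fun _ ha => isFinUnion_compl ha

theorem mem_boolSum_iff {B : ∀ i, BoolSubalg (Set (S i))} {P : Set (∀ i, S i)} :
    P ∈ (boolSum B).carrier ↔ IsFinUnion B P := by
  constructor
  · intro hP
    refine gen_subset (B := finUnionAlg B) ?_ hP
    rintro Q ⟨L, hL, rfl⟩
    exact ⟨{L}, Set.finite_singleton _, by rintro M rfl i; exact hL i, by simp [box]⟩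
  · rintro ⟨G, hG, hm, rfl⟩
    refine sUnion_mem _ (hG.image _) ?_
    rintro - ⟨L, hL, rfl⟩
    exact subset_gen ⟨L, hm L hL, rfl⟩

theorem boolSum_mono {B B' : ∀ i, BoolSubalg (Set (S i))}
    (h : ∀ i, (B i).carrier ⊆ (B' i).carrier) :
    (boolSum B).carrier ⊆ (boolSum B').carrier := by
  refine gen_subset ?_
  rintro Q ⟨L, hL, rfl⟩
  exact subset_gen ⟨L, fun i => h i (hL i), rfl⟩

end BoolAux
namespace BoolAux
variable {n : ℕ} {S : Fin n → Type*}

def slices (i : Fin n) (P : Set (∀ i, S i)) : Set (Set (S i)) :=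
  Set.range (fun x => slice i x P)

theorem update_mem_box_iff {x : ∀ k, S k} {i : Fin n} {y : S i} {L : ∀ i, Set (S i)} :
    Function.update x i y ∈ box L ↔ (∀ k, k ≠ i → x k ∈ L k) ∧ y ∈ L i := by
  classical
  constructor
  · intro h
    refine ⟨fun k hk => by simpa [Function.update_of_ne hk] using h k, by simpa using h i⟩
  · rintro ⟨h1, h2⟩ k
    rcases eq_or_ne k i with rfl | hk
    · simpa using h2
    · simpa [Function.update_of_ne hk] using h1 k hk

theorem slices_finite {P : Set (∀ i, S i)} {G : Set (∀ i, Set (S i))} (hG : G.Finite)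
    (hP : P = ⋃₀ (box '' G)) (i : Fin n) : (slices i P).Finite := by
  refine Set.Finite.subset ((hG.finite_subsets).image
    (fun H : Set (∀ i, Set (S i)) => ⋃₀ ((fun L : ∀ i, Set (S i) => L i) '' H))) ?_
  rintro - ⟨x, rfl⟩
  refine ⟨{L ∈ G | ∀ k, k ≠ i → x k ∈ L k}, fun L hL => hL.1, ?_⟩
  ext y
  rw [Set.mem_sUnion, mem_slice, hP, Set.mem_sUnion]
  constructor
  · rintro ⟨T, hT, h2⟩
    obtain ⟨L, hL, rfl⟩ := (Set.mem_image _ _ _).1 hT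
    exact ⟨box L, Set.mem_image_of_mem _ hL.1, update_mem_box_iff.2 ⟨hL.2, h2⟩⟩
  · rintro ⟨T, hT, hx⟩
    obtain ⟨L, hL, rfl⟩ := (Set.mem_image _ _ _).1 hT
    obtain ⟨h1, h2⟩ := update_mem_box_iff.1 hx
    exact ⟨L i, Set.mem_image_of_mem _ ⟨hL, h1⟩, h2⟩

def cls (i : Fin n) (P : Set (∀ i, S i)) (y : S i) : Set (S i) :=
  {z | ∀ T ∈ slices i P, (z ∈ T ↔ y ∈ T)}

theorem self_mem_cls {i : Fin n} {P : Set (∀ i, S i)} {y : S i} : y ∈ cls i P y :=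
  fun _ _ => Iff.rfl

theorem cls_mem {i : Fin n} {P : Set (∀ i, S i)} (C : BoolSubalg (Set (S i)))
    (hfin : (slices i P).Finite) (hT : ∀ T ∈ slices i P, T ∈ C.carrier) (y : S i) :
    cls i P y ∈ C.carrier := by
  classical
  have : cls i P y = ⋂₀ ((fun T => if y ∈ T then T else Tᶜ) '' slices i P) := by
    ext z
    simp only [cls, Set.mem_setOf_eq, Set.mem_sInter, Set.mem_image, forall_exists_index,
      and_imp]
    constructor
    · rintro h - T hT rfl
      split_ifs with hy
      · exact (h T hT).2 hy
      · exact fun hz => hy ((h T hT).1 hz)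
    · intro h T hTs
      have := h _ T hTs rfl
      split_ifs at this with hy
      · exact ⟨fun _ => hy, fun _ => this⟩
      · exact ⟨fun hz => absurd hz this, fun hy' => absurd hy' hy⟩
  rw [this]
  refine sInter_mem C (hfin.image _) ?_
  rintro - ⟨T, hTs, rfl⟩
  dsimp only
  split_ifs
  · exact hT T hTs
  · exact C.compl_mem (hT T hTs)

theorem cls_range_finite {i : Fin n} {P : Set (∀ i, S i)} (hfin : (slices i P).Finite) :
    (Set.range (cls i P)).Finite := by
  refine Set.Finite.subset ((hfin.finite_subsets).image
    (fun U => {z | ∀ T ∈ slices i P, (z ∈ T ↔ T ∈ U)})) ?_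
  rintro - ⟨y, rfl⟩
  refine ⟨{T ∈ slices i P | y ∈ T}, fun T hT => hT.1, ?_⟩
  ext z
  simp only [cls, Set.mem_setOf_eq]
  constructor
  · intro h T hT
    rw [h T hT]
    exact ⟨fun h' => h'.2, fun hy => ⟨hT, hy⟩⟩
  · intro h T hT
    rw [h T hT]
    exact ⟨fun hy => ⟨hT, hy⟩, fun h' => h'.2⟩

theorem cls_update {P : Set (∀ i, S i)} {x : ∀ k, S k} {i : Fin n} {y : S i}
    (h : y ∈ cls i P (x i)) : Function.update x i y ∈ P ↔ x ∈ P :=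
  (mem_slice.symm.trans (h (slice i x P) ⟨x, rfl⟩)).trans self_mem_slice_iff

theorem cls_swap {P : Set (∀ i, S i)} {x z : ∀ i, S i}
    (h : ∀ i, z i ∈ cls i P (x i)) : z ∈ P ↔ x ∈ P := by
  classical
  set w : ℕ → ∀ i, S i := fun m i => if (i : ℕ) < m then z i else x i with hw
  have key : ∀ m, (w m ∈ P ↔ x ∈ P) := by
    intro m
    induction m with
    | zero =>
      have : w 0 = x := by funext i; simp [hw]
      rw [this]
    | succ m ih =>
      by_cases hm : m < n
      · set i : Fin n := ⟨m, hm⟩ with hi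
        have hupd : w (m + 1) = Function.update (w m) i (z i) := by
          funext k
          rcases eq_or_ne k i with rfl | hk
          · simp [hw, Function.update_self, hi]
          · have hkm : (k : ℕ) ≠ m := fun hkm => hk (Fin.ext hkm)
            rw [Function.update_of_ne hk]
            simp only [hw]
            rcases Nat.lt_succ_iff_lt_or_eq.symm.symm with -
            by_cases hklt : (k : ℕ) < m
            · simp [hklt, Nat.lt_succ_of_lt hklt]
            · have : ¬ (k : ℕ) < m + 1 := by
                intro hlt
                rcases Nat.lt_succ_iff_lt_or_eq.1 hlt with h' | h'
                · exact hklt h'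
                · exact hkm h'
              simp [hklt, this]
        have hwmi : w m i = x i := by simp [hw, hi]
        rw [hupd, cls_update (by rw [hwmi]; exact h i)]
        exact ih
      · have : w (m + 1) = w m := by
          funext k
          have hk : (k : ℕ) < m := lt_of_lt_of_le k.isLt (le_of_not_gt hm)
          simp [hw, hk, Nat.lt_succ_of_lt hk]
        rw [this]; exact ih
  have hz : z = w n := by funext i; simp [hw, i.isLt]
  rw [hz]; exact key n

end BoolAux

/-- Sums of Boolean algebras of sets commute with (nonempty) intersections:
`⨅ⱼ (⊕ᵢ B i j) = ⊕ᵢ (⨅ⱼ B i j)`, where the infimum of Boolean subalgebras is given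
by the intersection of their carriers. -/
theorem iInf_boolSum_eq_boolSum_iInf {n : ℕ} {S : Fin n → Type*} {J : Type*}
    [Nonempty J] (B : ∀ i : Fin n, J → BoolSubalg (Set (S i))) :
    BoolSubalg.iInf (fun j => boolSum fun i => B i j) =
      boolSum fun i => BoolSubalg.iInf (B i) := by
  apply BoolAux.BoolSubalg.ext'
  apply Set.Subset.antisymm
  · -- hard direction
    intro P hP
    have hPj : ∀ j, P ∈ (boolSum fun i => B i j).carrier := fun j => Set.mem_iInter.1 hP j
    obtain ⟨j₀⟩ := ‹Nonempty J›
    obtain ⟨G, hGfin, -, hPeq⟩ := BoolAux.mem_boolSum_iff.1 (hPj j₀)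
    set C : ∀ i, BoolSubalg (Set (S i)) := fun i => BoolSubalg.iInf (B i) with hC
    have hslfin : ∀ i, (BoolAux.slices i P).Finite := BoolAux.slices_finite hGfin hPeq
    have hslC : ∀ i, ∀ T ∈ BoolAux.slices i P, T ∈ (C i).carrier := by
      rintro i T ⟨x, rfl⟩
      exact Set.mem_iInter.2 fun j => BoolAux.slice_mem (hPj j) i x
    rw [BoolAux.mem_boolSum_iff]
    refine ⟨(fun p : ∀ i, S i => fun i => BoolAux.cls i P (p i)) '' P, ?_, ?_, ?_⟩
    · refine Set.Finite.subset
        (Set.Finite.pi (fun i => BoolAux.cls_range_finite (hslfin i))) ?_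
      rintro - ⟨p, -, rfl⟩
      exact fun i _ => ⟨p i, rfl⟩
    · rintro - ⟨p, -, rfl⟩ i
      exact BoolAux.cls_mem (C i) (hslfin i) (hslC i) (p i)
    · ext x
      rw [Set.mem_sUnion]
      constructor
      · intro hx
        exact ⟨_, Set.mem_image_of_mem _ (Set.mem_image_of_mem _ hx),
          fun i => BoolAux.self_mem_cls⟩
      · rintro ⟨T, hT, hx⟩
        obtain ⟨c, hc, rfl⟩ := (Set.mem_image _ _ _).1 hT
        obtain ⟨p, hp, rfl⟩ := (Set.mem_image _ _ _).1 hc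
        exact (BoolAux.cls_swap fun i => hx i).2 hp
  · -- easy direction
    intro P hP
    refine Set.mem_iInter.2 fun j => ?_
    exact BoolAux.boolSum_mono (fun i a ha => Set.mem_iInter.1 ha j) hP
end
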